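/- Let A = K[[f_1,…,f_s]] ⊆ F = K[[x_1,…,x_n]] and a ∈ (ℝ_{>0})^n. If {g_1,…,g_r} and {g'_1,…,g'_t} are both a-reduced canonical bases of A, then {g_1,…,g_r} = {g'_1,…,g'_t} as subsets of F (in particular r = t); that is, the a-reduced canonical basis of A, if it exists, is unique. -/

import Mathlib

noncomputable section

namespace CanonicalFan

open MvPowerSeries

variable (K : Type*) [Field K] (n : ℕ)

/-- The weight `⟨a, α⟩ = ∑ i, a i * α i` of an exponent `α` with respect to `a`. -/
def weight (a : Fin n → ℝ) (α : Fin n →₀ ℕ) : ℝ := ∑ i, a i * (α i : ℝ)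

/-- The support of a formal power series. -/
def supp (f : MvPowerSeries (Fin n) K) : Set (Fin n →₀ ℕ) :=
  {α | MvPowerSeries.coeff α f ≠ 0}

/-- The `a`-valuation `ν(f,a)`, with the convention `ν(0,a) = +∞`. -/
def nu (a : Fin n → ℝ) (f : MvPowerSeries (Fin n) K) : EReal :=
  sInf ((fun α => ((weight n a α : ℝ) : EReal)) '' supp K n f)

open Classical in
/-- The `a`-initial form `in(f,a)` of a power series. -/
def initialForm (a : Fin n → ℝ) (f : MvPowerSeries (Fin n) K) :
    MvPowerSeries (Fin n) K :=
  fun α => if ((weight n a α : ℝ) : EReal) = nu K n a f then MvPowerSeries.coeff α f else 0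

open Classical in
/-- `exp(f,a)`: the `≺`-maximal element of the support of `in(f,a)`, where `≺` is the
well-ordering `r` (junk value `0` if no maximal element exists). -/
def exponent (r : (Fin n →₀ ℕ) → (Fin n →₀ ℕ) → Prop) (a : Fin n → ℝ)
    (f : MvPowerSeries (Fin n) K) : Fin n →₀ ℕ :=
  if h : ∃ β ∈ supp K n (initialForm K n a f),
      ∀ γ ∈ supp K n (initialForm K n a f), γ = β ∨ r γ β
  then h.choose else 0

/-- The `a`-leading monomial `M(f,a) = c_{exp(f,a)} x^{exp(f,a)}`. -/
def leadMon (r : (Fin n →₀ ℕ) → (Fin n →₀ ℕ) → Prop) (a : Fin n → ℝ)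
    (f : MvPowerSeries (Fin n) K) : MvPowerSeries (Fin n) K :=
  MvPowerSeries.monomial (exponent K n r a f)
    (MvPowerSeries.coeff (exponent K n r a f) f)

/-- The maximal ideal `(x_1, …, x_n)` of `K[[x_1,…,x_n]]`. -/
def mIdeal : Ideal (MvPowerSeries (Fin n) K) :=
  Ideal.span (Set.range (MvPowerSeries.X : Fin n → MvPowerSeries (Fin n) K))

/-- `K[[S]]`: the smallest `K`-subalgebra of `K[[x_1,…,x_n]]` containing `S` and closed in
the `(x_1,…,x_n)`-adic topology; concretely, the adic closure of `Algebra.adjoin K S`. -/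
def closedAdjoin (S : Set (MvPowerSeries (Fin n) K)) :
    Subalgebra K (MvPowerSeries (Fin n) K) where
  carrier := {f | ∀ N : ℕ, ∃ g ∈ Algebra.adjoin K S, f - g ∈ (mIdeal K n) ^ N}
  algebraMap_mem' c N :=
    ⟨algebraMap K _ c, Subalgebra.algebraMap_mem _ c, by simp [Ideal.zero_mem]⟩
  add_mem' {f g} hf hg N := by
    obtain ⟨p, hp, hfp⟩ := hf N
    obtain ⟨q, hq, hgq⟩ := hg N
    exact ⟨p + q, add_mem hp hq, by simpa [add_sub_add_comm] using Ideal.add_mem _ hfp hgq⟩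
  mul_mem' {f g} hf hg N := by
    obtain ⟨p, hp, hfp⟩ := hf N
    obtain ⟨q, hq, hgq⟩ := hg N
    refine ⟨p * q, mul_mem hp hq, ?_⟩
    have h : f * g - p * q = f * (g - q) + (f - p) * q := by ring
    rw [h]
    exact Ideal.add_mem _ (Ideal.mul_mem_left _ _ hgq) (Ideal.mul_mem_right _ _ hfp)

/-- `exp(A,a) = {exp(f,a) : f ∈ A, f ≠ 0}`. -/
def expSet (r : (Fin n →₀ ℕ) → (Fin n →₀ ℕ) → Prop) (a : Fin n → ℝ)
    (A : Set (MvPowerSeries (Fin n) K)) : Set (Fin n →₀ ℕ) :=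
  {β | ∃ f ∈ A, f ≠ 0 ∧ exponent K n r a f = β}

/-- `in(A,a) = K[[in(f,a) : f ∈ A ∖ {0}]]`. -/
def inAlgebra (a : Fin n → ℝ) (A : Set (MvPowerSeries (Fin n) K)) :
    Subalgebra K (MvPowerSeries (Fin n) K) :=
  closedAdjoin K n {g | ∃ f ∈ A, f ≠ 0 ∧ initialForm K n a f = g}

/-- `M(A,a) = K[[M(f,a) : f ∈ A ∖ {0}]]`. -/
def leadAlgebra (r : (Fin n →₀ ℕ) → (Fin n →₀ ℕ) → Prop) (a : Fin n → ℝ)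
    (A : Set (MvPowerSeries (Fin n) K)) : Subalgebra K (MvPowerSeries (Fin n) K) :=
  closedAdjoin K n {g | ∃ f ∈ A, f ≠ 0 ∧ leadMon K n r a f = g}

set_option synthInstance.maxHeartbeats 1000000 in
/-- The length of `F/A` as an `A`-module is finite. -/
def FiniteColength (A : Subalgebra K (MvPowerSeries (Fin n) K)) : Prop :=
  IsFiniteLength A
    (MvPowerSeries (Fin n) K ⧸ LinearMap.range (Algebra.linearMap A (MvPowerSeries (Fin n) K)))

/-- `{g_1,…,g_r}` is an `a`-canonical basis of `A`. -/
def IsCanonicalBasis (r : (Fin n →₀ ℕ) → (Fin n →₀ ℕ) → Prop) (a : Fin n → ℝ)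
    (A : Subalgebra K (MvPowerSeries (Fin n) K)) {m : ℕ}
    (g : Fin m → MvPowerSeries (Fin n) K) : Prop :=
  (∀ i, g i ∈ A ∧ g i ≠ 0) ∧
    leadAlgebra K n r a (A : Set (MvPowerSeries (Fin n) K)) =
      closedAdjoin K n (Set.range fun i => leadMon K n r a (g i))

/-- `{g_1,…,g_r}` is a minimal `a`-canonical basis of `A`. -/
def IsMinimalCanonicalBasis (r : (Fin n →₀ ℕ) → (Fin n →₀ ℕ) → Prop) (a : Fin n → ℝ)
    (A : Subalgebra K (MvPowerSeries (Fin n) K)) {m : ℕ}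
    (g : Fin m → MvPowerSeries (Fin n) K) : Prop :=
  IsCanonicalBasis K n r a A g ∧
    ∀ T : Set (MvPowerSeries (Fin n) K),
      T ⊂ Set.range (fun i => leadMon K n r a (g i)) →
        closedAdjoin K n T ≠ leadAlgebra K n r a (A : Set (MvPowerSeries (Fin n) K))

/-- `{g_1,…,g_r}` is the `a`-reduced canonical basis of `A`. -/
def IsReducedCanonicalBasis (r : (Fin n →₀ ℕ) → (Fin n →₀ ℕ) → Prop) (a : Fin n → ℝ)
    (A : Subalgebra K (MvPowerSeries (Fin n) K)) {m : ℕ}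
    (g : Fin m → MvPowerSeries (Fin n) K) : Prop :=
  IsMinimalCanonicalBasis K n r a A g ∧
    (∀ i, MvPowerSeries.coeff (exponent K n r a (g i)) (g i) = 1) ∧
    ∀ i, ∀ α ∈ supp K n (g i - leadMon K n r a (g i)),
      (MvPowerSeries.monomial α (1 : K)) ∉
        closedAdjoin K n (Set.range fun j => leadMon K n r a (g j))

/-- A power series is a (nonzero) monomial. -/
def IsMonomial (g : MvPowerSeries (Fin n) K) : Prop :=
  ∃ (α : Fin n →₀ ℕ) (c : K), c ≠ 0 ∧ g = MvPowerSeries.monomial α c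


def deg (α : Fin n →₀ ℕ) : ℕ := ∑ i, α i

lemma deg_add (α β : Fin n →₀ ℕ) : deg n (α + β) = deg n α + deg n β := by
  simp [deg, Finset.sum_add_distrib]

/-- the ideal of series with coefficients vanishing below degree N -/
def lowZero (N : ℕ) : Ideal (MvPowerSeries (Fin n) K) where
  carrier := {f | ∀ α, deg n α < N → coeff α f = 0}
  zero_mem' := by intro α _; simp
  add_mem' := by intro f g hf hg α hα; simp [map_add, hf α hα, hg α hα]
  smul_mem' := by
    intro c f hf α hα
    rw [smul_eq_mul, coeff_mul]
    refine Finset.sum_eq_zero fun p hp => ?_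
    rw [Finset.HasAntidiagonal.mem_antidiagonal] at hp
    have h2 : deg n p.2 < N := by
      have := deg_add n p.1 p.2; rw [hp] at this; omega
    rw [hf p.2 h2, mul_zero]

lemma mem_lowZero {N : ℕ} {f : MvPowerSeries (Fin n) K} :
    f ∈ lowZero K n N ↔ ∀ α, deg n α < N → coeff α f = 0 := Iff.rfl

lemma mIdeal_le_lowZero : mIdeal K n ≤ lowZero K n 1 := by
  rw [mIdeal, Ideal.span_le]
  rintro _ ⟨i, rfl⟩
  rw [SetLike.mem_coe, mem_lowZero]
  intro α hα
  rw [MvPowerSeries.coeff_X]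
  split
  · next h =>
    subst h
    simp [deg, Finsupp.single_apply] at hα
  · rfl

lemma lowZero_mul (a b : ℕ) : lowZero K n a * lowZero K n b ≤ lowZero K n (a + b) := by
  rw [Ideal.mul_le]
  intro f hf g hg
  rw [mem_lowZero]
  intro α hα
  rw [coeff_mul]
  refine Finset.sum_eq_zero fun p hp => ?_
  rw [Finset.HasAntidiagonal.mem_antidiagonal] at hp
  by_cases h1 : deg n p.1 < a
  · rw [hf p.1 h1, zero_mul]
  · have : deg n p.2 < b := by
      have := deg_add n p.1 p.2; rw [hp] at this; omega
    rw [hg p.2 this, mul_zero]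

lemma pow_mIdeal_le (N : ℕ) : (mIdeal K n) ^ N ≤ lowZero K n N := by
  induction N with
  | zero => intro f _; rw [mem_lowZero]; intro α hα; omega
  | succ N ih =>
    rw [pow_succ]
    calc (mIdeal K n) ^ N * mIdeal K n ≤ lowZero K n N * lowZero K n 1 :=
          Ideal.mul_mono ih (mIdeal_le_lowZero K n)
      _ ≤ lowZero K n (N + 1) := lowZero_mul K n N 1

lemma coeff_eq_zero_of_mem_pow {N : ℕ} {f : MvPowerSeries (Fin n) K}
    (hf : f ∈ (mIdeal K n) ^ N) {α : Fin n →₀ ℕ} (hα : deg n α < N) :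
    coeff α f = 0 := (pow_mIdeal_le K n N hf) α hα

section Lemmas

lemma mem_closedAdjoin {S : Set (MvPowerSeries (Fin n) K)} {f : MvPowerSeries (Fin n) K} :
    f ∈ closedAdjoin K n S ↔ ∀ N : ℕ, ∃ g ∈ Algebra.adjoin K S, f - g ∈ (mIdeal K n) ^ N :=
  Iff.rfl

lemma adjoin_le_closedAdjoin (S : Set (MvPowerSeries (Fin n) K)) :
    Algebra.adjoin K S ≤ closedAdjoin K n S := fun f hf =>
  (mem_closedAdjoin K n).2 fun N => ⟨f, hf, by simp [Ideal.zero_mem]⟩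

lemma subset_closedAdjoin (S : Set (MvPowerSeries (Fin n) K)) :
    S ⊆ ↑(closedAdjoin K n S) := fun x hx =>
  adjoin_le_closedAdjoin K n S (Algebra.subset_adjoin hx)

lemma closedAdjoin_le {S T : Set (MvPowerSeries (Fin n) K)}
    (h : S ⊆ ↑(closedAdjoin K n T)) : closedAdjoin K n S ≤ closedAdjoin K n T := by
  have hadj : Algebra.adjoin K S ≤ closedAdjoin K n T := Algebra.adjoin_le h
  intro f hf
  rw [mem_closedAdjoin] at hf ⊢
  intro N
  obtain ⟨g, hg, hfg⟩ := hf N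
  obtain ⟨h', hh', hgh⟩ := (mem_closedAdjoin K n).1 (hadj hg) N
  refine ⟨h', hh', ?_⟩
  have : f - h' = (f - g) + (g - h') := by ring
  rw [this]
  exact Ideal.add_mem _ hfg hgh

/-- series supported on an additive submonoid of exponents -/
def suppIn (M : AddSubmonoid (Fin n →₀ ℕ)) : Subalgebra K (MvPowerSeries (Fin n) K) where
  carrier := {f | ∀ α, MvPowerSeries.coeff α f ≠ 0 → α ∈ M}
  algebraMap_mem' c α hα := by
    rw [MvPowerSeries.algebraMap_apply, Algebra.algebraMap_self_apply, MvPowerSeries.coeff_C] at hα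
    split at hα
    · next h => subst h; exact M.zero_mem
    · exact absurd rfl hα
  add_mem' {f g} hf hg α hα := by
    rw [map_add] at hα
    by_cases h1 : MvPowerSeries.coeff α f ≠ 0
    · exact hf α h1
    · push_neg at h1
      exact hg α (by rw [h1, zero_add] at hα; exact hα)
  mul_mem' {f g} hf hg α hα := by
    rw [MvPowerSeries.coeff_mul] at hα
    obtain ⟨p, hp, hne⟩ := Finset.exists_ne_zero_of_sum_ne_zero hα
    rw [Finset.HasAntidiagonal.mem_antidiagonal] at hp
    have h1 : MvPowerSeries.coeff p.1 f ≠ 0 := left_ne_zero_of_mul hne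
    have h2 : MvPowerSeries.coeff p.2 g ≠ 0 := right_ne_zero_of_mul hne
    rw [← hp]
    exact M.add_mem (hf _ h1) (hg _ h2)

lemma mem_suppIn {M : AddSubmonoid (Fin n →₀ ℕ)} {f : MvPowerSeries (Fin n) K} :
    f ∈ suppIn K n M ↔ ∀ α, MvPowerSeries.coeff α f ≠ 0 → α ∈ M := Iff.rfl

lemma closedAdjoin_le_suppIn {S : Set (MvPowerSeries (Fin n) K)}
    {M : AddSubmonoid (Fin n →₀ ℕ)} (h : S ⊆ ↑(suppIn K n M)) :
    closedAdjoin K n S ≤ suppIn K n M := by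
  have hadj : Algebra.adjoin K S ≤ suppIn K n M := Algebra.adjoin_le h
  intro f hf
  rw [mem_suppIn]
  intro α hα
  obtain ⟨g, hg, hfg⟩ := (mem_closedAdjoin K n).1 hf (deg n α + 1)
  have hz : MvPowerSeries.coeff α (f - g) = 0 :=
    coeff_eq_zero_of_mem_pow K n hfg (by omega)
  rw [map_sub, sub_eq_zero] at hz
  exact hadj hg α (by rw [← hz]; exact hα)

lemma monomial_one_injective :
    Function.Injective (fun γ : Fin n →₀ ℕ => MvPowerSeries.monomial γ (1 : K)) := by
  intro γ δ h
  by_contra hne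
  have := congrArg (MvPowerSeries.coeff γ) h
  rw [MvPowerSeries.coeff_monomial_same, MvPowerSeries.coeff_monomial, if_neg hne] at this
  exact one_ne_zero this

lemma monomial_mem_closedAdjoin {B : Set (Fin n →₀ ℕ)} {β : Fin n →₀ ℕ}
    (hβ : β ∈ AddSubmonoid.closure B) :
    MvPowerSeries.monomial β (1 : K) ∈
      closedAdjoin K n ((fun γ => MvPowerSeries.monomial γ (1 : K)) '' B) := by
  induction hβ using AddSubmonoid.closure_induction with
  | mem γ hγ => exact subset_closedAdjoin K n _ ⟨γ, hγ, rfl⟩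
  | zero => simpa using (closedAdjoin K n _).one_mem
  | add γ δ _ _ hγ hδ => 
    have : MvPowerSeries.monomial (γ + δ) (1 : K) =
        MvPowerSeries.monomial γ (1 : K) * MvPowerSeries.monomial δ (1 : K) := by
      rw [MvPowerSeries.monomial_mul_monomial, one_mul]
    rw [this]
    exact mul_mem hγ hδ

lemma mem_closure_of_monomial_mem {B : Set (Fin n →₀ ℕ)} {β : Fin n →₀ ℕ}
    (h : MvPowerSeries.monomial β (1 : K) ∈
      closedAdjoin K n ((fun γ => MvPowerSeries.monomial γ (1 : K)) '' B)) :
    β ∈ AddSubmonoid.closure B := by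
  have hsub : ((fun γ => MvPowerSeries.monomial γ (1 : K)) '' B) ⊆
      ↑(suppIn K n (AddSubmonoid.closure B)) := by
    rintro _ ⟨γ, hγ, rfl⟩
    rw [SetLike.mem_coe, mem_suppIn]
    intro α hα
    rw [MvPowerSeries.coeff_monomial] at hα
    split at hα
    · next hh => rw [hh]; exact AddSubmonoid.subset_closure hγ
    · exact absurd rfl hα
  have := closedAdjoin_le_suppIn K n hsub h
  rw [mem_suppIn] at this
  exact this β (by rw [MvPowerSeries.coeff_monomial_same]; exact one_ne_zero)

lemma monomial_one_mem_of_monomial_mem {A' : Subalgebra K (MvPowerSeries (Fin n) K)}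
    {β : Fin n →₀ ℕ} {c : K} (hc : c ≠ 0)
    (h : MvPowerSeries.monomial β c ∈ A') :
    MvPowerSeries.monomial β (1 : K) ∈ A' := by
  have : MvPowerSeries.monomial β (1 : K) = c⁻¹ • MvPowerSeries.monomial β c := by
    rw [← map_smul, smul_eq_mul, inv_mul_cancel₀ hc]
  rw [this]
  exact A'.smul_mem h c⁻¹

lemma deg_eq_zero_iff {α : Fin n →₀ ℕ} : deg n α = 0 ↔ α = 0 := by
  constructor
  · intro h
    ext i
    rw [deg, Finset.sum_eq_zero_iff] at h
    exact h i (Finset.mem_univ i)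
  · rintro rfl; simp [deg]

end Lemmas
section Lemmas3

lemma exists_rmax {r : (Fin n →₀ ℕ) → (Fin n →₀ ℕ) → Prop}
    (hr : IsWellOrder (Fin n →₀ ℕ) r) (s : Finset (Fin n →₀ ℕ)) (hs : s.Nonempty) :
    ∃ β ∈ s, ∀ γ ∈ s, γ = β ∨ r γ β := by
  classical
  induction s using Finset.induction_on with
  | empty => simp at hs
  | insert x s' hx ih =>
    by_cases hs' : s'.Nonempty
    · obtain ⟨β, hβ, hmax⟩ := ih hs'
      rcases (by haveI := hr; exact trichotomous_of r x β) with h | h | h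
      · refine ⟨β, Finset.mem_insert_of_mem hβ, ?_⟩
        intro γ hγ
        rcases Finset.mem_insert.1 hγ with rfl | hγ'
        · exact Or.inr h
        · exact hmax γ hγ'
      · subst h
        refine ⟨x, Finset.mem_insert_self _ _, ?_⟩
        intro γ hγ
        rcases Finset.mem_insert.1 hγ with rfl | hγ'
        · exact Or.inl rfl
        · exact hmax γ hγ'
      · refine ⟨x, Finset.mem_insert_self _ _, ?_⟩
        intro γ hγ
        rcases Finset.mem_insert.1 hγ with rfl | hγ'
        · exact Or.inl rfl
        · rcases hmax γ hγ' with rfl | h'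
          · exact Or.inr h
          · exact Or.inr (by haveI := hr; exact trans_of r h' h)
    · rw [Finset.not_nonempty_iff_eq_empty] at hs'
      subst hs'
      exact ⟨x, Finset.mem_insert_self _ _, by simp⟩

lemma weight_finite {a : Fin n → ℝ} (ha : ∀ i, 0 < a i) (C : ℝ) :
    {α : Fin n →₀ ℕ | weight n a α ≤ C}.Finite := by
  classical
  set μ : Fin n →₀ ℕ := Finsupp.equivFunOnFinite.symm (fun j => ⌊C / a j⌋₊) with hμ
  refine (Set.finite_Iic μ).subset ?_
  intro α hα
  rw [Set.mem_setOf_eq] at hα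
  rw [Set.mem_Iic]
  intro j
  have hterm : a j * (α j : ℝ) ≤ C := by
    refine le_trans ?_ hα
    rw [weight]
    have : ∀ i ∈ Finset.univ, (0:ℝ) ≤ a i * (α i : ℝ) := fun i _ =>
      mul_nonneg (ha i).le (Nat.cast_nonneg _)
    exact Finset.single_le_sum this (Finset.mem_univ j)
  have hdiv : (α j : ℝ) ≤ C / a j := (le_div_iff₀ (ha j)).2 (by linarith [hterm])
  have : α j ≤ ⌊C / a j⌋₊ := Nat.le_floor hdiv
  simpa [hμ] using this

lemma supp_nonempty {f : MvPowerSeries (Fin n) K} (hf : f ≠ 0) :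
    (supp K n f).Nonempty := by
  by_contra h
  rw [Set.not_nonempty_iff_eq_empty] at h
  apply hf
  ext α
  rw [map_zero]
  by_contra hc
  have : α ∈ supp K n f := hc
  rw [h] at this
  exact this

lemma coeff_initialForm (a : Fin n → ℝ) (f : MvPowerSeries (Fin n) K) (α : Fin n →₀ ℕ) :
    MvPowerSeries.coeff α (initialForm K n a f) =
      if ((weight n a α : ℝ) : EReal) = nu K n a f then MvPowerSeries.coeff α f else 0 :=
  rfl

/-- main spec for the exponent of a nonzero series: it lies in the support,
and is the r-maximum of the support of the initial form. -/
lemma exponent_spec {r : (Fin n →₀ ℕ) → (Fin n →₀ ℕ) → Prop}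
    (hr : IsWellOrder (Fin n →₀ ℕ) r) {a : Fin n → ℝ} (ha : ∀ i, 0 < a i)
    {f : MvPowerSeries (Fin n) K} (hf : f ≠ 0) :
    MvPowerSeries.coeff (exponent K n r a f) f ≠ 0 := by
  classical
  obtain ⟨α0, hα0⟩ := supp_nonempty K n hf
  -- the set of support elements of weight ≤ weight α0 is finite and nonempty
  have hfin : ({α ∈ supp K n f | weight n a α ≤ weight n a α0}).Finite :=
    (weight_finite n ha (weight n a α0)).subset (fun α hα => hα.2)
  have hne : ({α ∈ supp K n f | weight n a α ≤ weight n a α0}).Nonempty :=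
    ⟨α0, hα0, le_refl _⟩
  obtain ⟨αm, hαm, hmin⟩ := hfin.toFinset.exists_min_image (weight n a)
    (by rwa [← hfin.toFinset_nonempty] at hne)
  rw [Set.Finite.mem_toFinset] at hαm
  have hminall : ∀ α ∈ supp K n f, weight n a αm ≤ weight n a α := by
    intro α hα
    by_cases hle : weight n a α ≤ weight n a α0
    · exact hmin α (by rw [Set.Finite.mem_toFinset]; exact ⟨hα, hle⟩)
    · exact le_trans hαm.2 (le_of_not_ge hle)
  -- nu f = weight αm
  have hnu : nu K n a f = ((weight n a αm : ℝ) : EReal) := by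
    apply le_antisymm
    · exact sInf_le ⟨αm, hαm.1, rfl⟩
    · apply le_sInf
      rintro _ ⟨α, hα, rfl⟩
      exact EReal.coe_le_coe_iff.2 (hminall α hα)
  -- support of initial form
  have hsuppin : supp K n (initialForm K n a f) =
      {α ∈ supp K n f | ((weight n a α : ℝ) : EReal) = nu K n a f} := by
    ext α
    simp only [supp, Set.mem_setOf_eq, coeff_initialForm]
    split
    · next h => exact ⟨fun hc => ⟨hc, h⟩, fun hc => hc.1⟩
    · next h => exact ⟨fun hc => absurd rfl hc, fun hc => absurd hc.2 h⟩
  have hfin2 : (supp K n (initialForm K n a f)).Finite := by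
    rw [hsuppin]
    refine (weight_finite n ha (weight n a αm)).subset ?_
    intro α hα
    rw [Set.mem_setOf_eq]
    have := hα.2
    rw [hnu, EReal.coe_eq_coe_iff] at this
    exact this.le
  have hne2 : (supp K n (initialForm K n a f)).Nonempty := by
    rw [hsuppin]
    exact ⟨αm, hαm.1, by rw [hnu]⟩
  -- existence of r-max
  obtain ⟨β, hβ, hmax⟩ := exists_rmax n hr hfin2.toFinset
    (by rwa [← hfin2.toFinset_nonempty] at hne2)
  rw [Set.Finite.mem_toFinset] at hβ
  have hex : ∃ β ∈ supp K n (initialForm K n a f),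
      ∀ γ ∈ supp K n (initialForm K n a f), γ = β ∨ r γ β := by
    refine ⟨β, hβ, fun γ hγ => hmax γ ?_⟩
    rwa [Set.Finite.mem_toFinset]
  rw [exponent, dif_pos hex]
  have hspec : MvPowerSeries.coeff hex.choose (initialForm K n a f) ≠ 0 :=
    hex.choose_spec.1
  rw [coeff_initialForm] at hspec
  split at hspec
  · exact hspec
  · exact absurd rfl hspec

lemma mem_closure_cases {B : Set (Fin n →₀ ℕ)} {μ : Fin n →₀ ℕ}
    (h : μ ∈ AddSubmonoid.closure B) :
    μ = 0 ∨ μ ∈ B ∨ ∃ γ δ, γ ∈ AddSubmonoid.closure B ∧ δ ∈ AddSubmonoid.closure B ∧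
      γ ≠ 0 ∧ δ ≠ 0 ∧ μ = γ + δ := by
  induction h using AddSubmonoid.closure_induction with
  | mem γ hγ => exact Or.inr (Or.inl hγ)
  | zero => exact Or.inl rfl
  | add γ δ hγc hδc hγ hδ =>
    by_cases h1 : γ = 0
    · subst h1; rw [zero_add]; exact hδ
    · by_cases h2 : δ = 0
      · subst h2; rw [add_zero]; exact hγ
      · exact Or.inr (Or.inr ⟨γ, δ, hγc, hδc, h1, h2, rfl⟩)

lemma closure_low {B : Set (Fin n →₀ ℕ)} {β : Fin n →₀ ℕ} {μ : Fin n →₀ ℕ}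
    (h : μ ∈ AddSubmonoid.closure B) (hd : deg n μ < deg n β) :
    μ ∈ AddSubmonoid.closure (B \ {β}) := by
  induction h using AddSubmonoid.closure_induction with
  | mem γ hγ =>
    refine AddSubmonoid.subset_closure ⟨hγ, ?_⟩
    intro hc
    rw [Set.mem_singleton_iff] at hc
    subst hc
    exact lt_irrefl _ hd
  | zero => exact AddSubmonoid.zero_mem _
  | add γ δ hγc hδc hγ hδ =>
    rw [deg_add] at hd
    exact AddSubmonoid.add_mem _ (hγ (by omega)) (hδ (by omega))

end Lemmas3

section Main

lemma reduced_subset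
    (r : (Fin n →₀ ℕ) → (Fin n →₀ ℕ) → Prop) (hr : IsWellOrder (Fin n →₀ ℕ) r)
    (A : Subalgebra K (MvPowerSeries (Fin n) K))
    (a : Fin n → ℝ) (ha : ∀ i, 0 < a i)
    {p q : ℕ} {g : Fin p → MvPowerSeries (Fin n) K} {g' : Fin q → MvPowerSeries (Fin n) K}
    (hg : IsReducedCanonicalBasis K n r a A g)
    (hg' : IsReducedCanonicalBasis K n r a A g') :
    Set.range g ⊆ Set.range g' := by
  classical
  set m : (Fin n →₀ ℕ) → MvPowerSeries (Fin n) K :=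
    fun γ => MvPowerSeries.monomial γ (1 : K) with hm
  set β : Fin p → (Fin n →₀ ℕ) := fun i => exponent K n r a (g i) with hβdef
  set β' : Fin q → (Fin n →₀ ℕ) := fun j => exponent K n r a (g' j) with hβ'def
  set B : Set (Fin n →₀ ℕ) := Set.range β with hBdef
  set B' : Set (Fin n →₀ ℕ) := Set.range β' with hB'def
  have hLM : ∀ i, leadMon K n r a (g i) = m (β i) := fun i => by
    rw [leadMon, hg.2.1 i]
  have hLM' : ∀ j, leadMon K n r a (g' j) = m (β' j) := fun j => by
    rw [leadMon, hg'.2.1 j]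
  have hrange : (Set.range fun i => leadMon K n r a (g i)) = m '' B := by
    rw [show (fun i => leadMon K n r a (g i)) = m ∘ β from funext hLM, Set.range_comp]
  have hrange' : (Set.range fun j => leadMon K n r a (g' j)) = m '' B' := by
    rw [show (fun j => leadMon K n r a (g' j)) = m ∘ β' from funext hLM', Set.range_comp]
  have hE : closedAdjoin K n (m '' B) = leadAlgebra K n r a (A : Set (MvPowerSeries (Fin n) K)) := by
    rw [← hrange]; exact hg.1.1.2.symm
  have hE' : closedAdjoin K n (m '' B') = leadAlgebra K n r a (A : Set (MvPowerSeries (Fin n) K)) := by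
    rw [← hrange']; exact hg'.1.1.2.symm
  -- 0 is not an exponent of a basis element
  have h0 : ∀ (P Q : ℕ) (G : Fin P → MvPowerSeries (Fin n) K)
      (hG : IsReducedCanonicalBasis K n r a A G)
      (hEG : closedAdjoin K n (m '' Set.range (fun i => exponent K n r a (G i))) =
        leadAlgebra K n r a (A : Set (MvPowerSeries (Fin n) K)))
      (hrangeG : (Set.range fun i => leadMon K n r a (G i)) =
        m '' Set.range (fun i => exponent K n r a (G i))),
      (0 : Fin n →₀ ℕ) ∉ Set.range (fun i => exponent K n r a (G i)) := by
    intro P Q G hG hEG hrangeG h0B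
    set BG := Set.range (fun i => exponent K n r a (G i))
    refine hG.1.2 ((m '' BG) \ {m 0}) ?_ ?_
    · rw [hrangeG]
      refine (Set.ssubset_iff_of_subset Set.diff_subset).2 ⟨m 0, ⟨0, h0B, rfl⟩, fun hT => hT.2 rfl⟩
    · apply le_antisymm
      · exact le_trans (closedAdjoin_le K n
          ((Set.diff_subset).trans (subset_closedAdjoin K n _))) hEG.le
      · rw [← hEG]
        apply closedAdjoin_le
        rintro _ ⟨γ, hγ, rfl⟩
        by_cases hc : m γ = m 0
        · rw [hc]
          have h1 : m 0 = 1 := by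
            rw [hm]; exact MvPowerSeries.monomial_zero_one
          rw [h1]
          exact one_mem _
        · exact subset_closedAdjoin K n _ ⟨⟨γ, hγ, rfl⟩, hc⟩
  have h0B : (0 : Fin n →₀ ℕ) ∉ B := h0 p q g hg hE hrange
  have h0B' : (0 : Fin n →₀ ℕ) ∉ B' := h0 q p g' hg' hE' hrange'
  -- the two exponent sets generate the same monoid
  have hmemB' : ∀ γ ∈ B, γ ∈ AddSubmonoid.closure B' := by
    intro γ hγ
    apply mem_closure_of_monomial_mem K n
    show m γ ∈ closedAdjoin K n (m '' B')
    rw [hE', ← hE]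
    exact subset_closedAdjoin K n _ ⟨γ, hγ, rfl⟩
  have hmemB : ∀ γ ∈ B', γ ∈ AddSubmonoid.closure B := by
    intro γ hγ
    apply mem_closure_of_monomial_mem K n
    show m γ ∈ closedAdjoin K n (m '' B)
    rw [hE, ← hE']
    exact subset_closedAdjoin K n _ ⟨γ, hγ, rfl⟩
  have hBB' : AddSubmonoid.closure B' = AddSubmonoid.closure B := by
    apply le_antisymm
    · rw [AddSubmonoid.closure_le]; exact fun γ hγ => hmemB γ hγ
    · rw [AddSubmonoid.closure_le]; exact fun γ hγ => hmemB' γ hγ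
  -- B ⊆ B'
  have hsubB : B ⊆ B' := by
    intro b hb
    by_contra hbB'
    rcases mem_closure_cases n (hmemB' b hb) with h0' | hin | ⟨γ, δ, hγ, hδ, hγ0, hδ0, heq⟩
    · exact h0B (h0' ▸ hb)
    · exact hbB' hin
    · rw [hBB'] at hγ hδ
      have hdγ1 : 1 ≤ deg n γ := Nat.one_le_iff_ne_zero.2
        (fun hc => hγ0 ((deg_eq_zero_iff n).1 hc))
      have hdδ1 : 1 ≤ deg n δ := Nat.one_le_iff_ne_zero.2
        (fun hc => hδ0 ((deg_eq_zero_iff n).1 hc))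
      have hdb : deg n b = deg n γ + deg n δ := by rw [heq, deg_add]
      have hγ' : γ ∈ AddSubmonoid.closure (B \ {b}) := closure_low n hγ (by omega)
      have hδ' : δ ∈ AddSubmonoid.closure (B \ {b}) := closure_low n hδ (by omega)
      have hb' : b ∈ AddSubmonoid.closure (B \ {b}) := by
        have hsum : γ + δ ∈ AddSubmonoid.closure (B \ {b}) := AddSubmonoid.add_mem _ hγ' hδ'
        rwa [← heq] at hsum
      have hmT : m '' (B \ {b}) = (m '' B) \ {m b} := by
        rw [Set.image_diff (monomial_one_injective K n), Set.image_singleton]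
      refine hg.1.2 ((m '' B) \ {m b}) ?_ ?_
      · rw [hrange]
        exact (Set.ssubset_iff_of_subset Set.diff_subset).2
          ⟨m b, ⟨b, hb, rfl⟩, fun hT => hT.2 rfl⟩
      · apply le_antisymm
        · exact le_trans (closedAdjoin_le K n
            ((Set.diff_subset).trans (subset_closedAdjoin K n _))) hE.le
        · rw [← hE]
          apply closedAdjoin_le
          rintro _ ⟨γ'', hγ'', rfl⟩
          by_cases hc : γ'' = b
          · subst hc
            have := monomial_mem_closedAdjoin K n hb'
            rwa [hmT] at this
          · exact subset_closedAdjoin K n _ ⟨⟨γ'', hγ'', rfl⟩,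
              fun hmb => hc (monomial_one_injective K n (Set.mem_singleton_iff.1 hmb))⟩
  -- conclude
  rintro _ ⟨i, rfl⟩
  obtain ⟨j, hj⟩ : ∃ j, β' j = β i := hsubB ⟨i, rfl⟩
  suffices hgij : g i = g' j by rw [hgij]; exact ⟨j, rfl⟩
  by_contra hne
  have hh0 : g i - g' j ≠ 0 := sub_ne_zero.2 hne
  have hhA : g i - g' j ∈ A := sub_mem (hg.1.1.1 i).1 (hg'.1.1.1 j).1
  have hc : MvPowerSeries.coeff (exponent K n r a (g i - g' j)) (g i - g' j) ≠ 0 :=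
    exponent_spec K n hr ha hh0
  set α := exponent K n r a (g i - g' j) with hαdef
  have hlm : leadMon K n r a (g i - g' j) ∈
      leadAlgebra K n r a (A : Set (MvPowerSeries (Fin n) K)) :=
    subset_closedAdjoin K n _ ⟨g i - g' j, hhA, hh0, rfl⟩
  have hmono : m α ∈ leadAlgebra K n r a (A : Set (MvPowerSeries (Fin n) K)) :=
    monomial_one_mem_of_monomial_mem K n hc hlm
  have hαβ : α ≠ β i := by
    intro hc'
    apply hc
    rw [hc', map_sub]
    have e1 : MvPowerSeries.coeff (β i) (g i) = 1 := hg.2.1 i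
    have e2 : MvPowerSeries.coeff (β i) (g' j) = 1 := by
      rw [← hj]; exact hg'.2.1 j
    rw [e1, e2, sub_self]
  have hcoeff : MvPowerSeries.coeff α (g i) ≠ 0 ∨ MvPowerSeries.coeff α (g' j) ≠ 0 := by
    by_contra hcc
    push_neg at hcc
    apply hc
    rw [map_sub, hcc.1, hcc.2, sub_self]
  rcases hcoeff with h1 | h1
  · refine hg.2.2 i α ?_ ?_
    · show MvPowerSeries.coeff α (g i - leadMon K n r a (g i)) ≠ 0
      rw [map_sub, hLM i, hm]
      rw [MvPowerSeries.coeff_monomial, if_neg hαβ, sub_zero]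
      exact h1
    · rw [← hg.1.1.2]
      exact hmono
  · refine hg'.2.2 j α ?_ ?_
    · show MvPowerSeries.coeff α (g' j - leadMon K n r a (g' j)) ≠ 0
      rw [map_sub, hLM' j, hm]
      rw [MvPowerSeries.coeff_monomial, if_neg (by rw [hj]; exact hαβ), sub_zero]
      exact h1
    · rw [← hg'.1.1.2]
      exact hmono

end Main

/-- the `a`-reduced canonical basis of `A`, if it exists, is unique
(as a subset of `F`). -/
theorem reducedCanonicalBasis_unique
    (r : (Fin n →₀ ℕ) → (Fin n →₀ ℕ) → Prop) (hr : IsWellOrder (Fin n →₀ ℕ) r)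
    (hradd : ∀ α β γ : Fin n →₀ ℕ, r α β → r (α + γ) (β + γ))
    (s : ℕ) (f : Fin s → MvPowerSeries (Fin n) K) (hf : ∀ i, f i ≠ 0)
    (A : Subalgebra K (MvPowerSeries (Fin n) K)) (hA : A = closedAdjoin K n (Set.range f))
    (a : Fin n → ℝ) (ha : ∀ i, 0 < a i)
    (p q : ℕ) (g : Fin p → MvPowerSeries (Fin n) K) (g' : Fin q → MvPowerSeries (Fin n) K)
    (hg : IsReducedCanonicalBasis K n r a A g)
    (hg' : IsReducedCanonicalBasis K n r a A g') :
    Set.range g = Set.range g' := by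
  exact Set.Subset.antisymm (reduced_subset K n r hr A a ha hg hg')
    (reduced_subset K n r hr A a ha hg' hg)

end CanonicalFan
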